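/- Let B ≥ 1 and ℓ ≥ 0 be integers, and let x(ℓB), x(ℓB+1), …, x((ℓ+1)B) be states such that each x(k+1) is obtained from x(k) by a balancing step with pair set Ē(k). After relabeling the nodes so that f_1'(x_1(ℓB)) ≥ … ≥ f_n'(x_n(ℓB)), suppose that for every d ∈ {1,…,n−1} with f_d'(x_d(ℓB)) > f_{d+1}'(x_{d+1}(ℓB)) there is a time k ∈ {ℓB,…,(ℓ+1)B−1} and a pair in Ē(k) with one endpoint in {1,…,d} and the other in {d+1,…,n}. Suppose further that x(ℓB) ∈ S and that x* ∈ S minimizes F over S (so the derivatives f_i'(x_i*) all equal a common value). Then Σ_{k=ℓB}^{(ℓ+1)B−1} Σ_{{i,j} ∈ Ē(k)} (f_i'(x_i(k)) − f_j'(x_j(k)))² ≥ (1/n²) Σ_{i=1}^n (f_i'(x_i(ℓB)) − f_i'(x_i*))². -/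

import Mathlib

/-- A balancing step from state `x` to state `y`, specified by a finite set `E` of
unordered pairs of distinct nodes such that: (i) the derivatives of the two endpoints
of each pair differ; (ii) every node belongs to at most one pair in which its
derivative is the strictly larger of the two, and at most one pair in which its
derivative is the strictly smaller of the two; and
`y i = x i − Σ_{j : {i,j} ∈ E} (f_i'(x_i) − f_j'(x_j)) / (2(L_i + L_j))`. -/
def IsBalancingStep (n : ℕ) (f' : Fin n → ℝ → ℝ) (L : Fin n → ℝ)
    (x y : Fin n → ℝ) (E : Finset (Sym2 (Fin n))) : Prop :=
  (∀ i j : Fin n, s(i, j) ∈ E → f' i (x i) ≠ f' j (x j)) ∧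
  (∀ i : Fin n,
    (Finset.univ.filter fun j => s(i, j) ∈ E ∧ f' j (x j) < f' i (x i)).card ≤ 1) ∧
  (∀ i : Fin n,
    (Finset.univ.filter fun j => s(i, j) ∈ E ∧ f' i (x i) < f' j (x j)).card ≤ 1) ∧
  (∀ i : Fin n, y i = x i - ∑ j ∈ Finset.univ.filter (fun j => s(i, j) ∈ E),
      (f' i (x i) - f' j (x j)) / (2 * (L i + L j)))

lemma mono_of_convex {f g : ℝ → ℝ} (hconv : ConvexOn ℝ Set.univ f)
    (hderiv : ∀ t, HasDerivAt f (g t) t) : Monotone g := by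
  have h := hconv.monotoneOn_deriv (fun x _ => (hderiv x).differentiableAt)
  intro a b hab
  have ha := (hderiv a).deriv
  have hb := (hderiv b).deriv
  rw [← ha, ← hb]
  exact h (Set.mem_univ a) (Set.mem_univ b) hab

lemma step_lower {n : ℕ} {f' : Fin n → ℝ → ℝ} {L : Fin n → ℝ} {x y : Fin n → ℝ}
    {E : Finset (Sym2 (Fin n))}
    (hbal : IsBalancingStep n f' L x y E)
    (hL : ∀ i, 0 < L i) (hmono : ∀ i, Monotone (f' i))
    (hlip : ∀ i, ∀ a b : ℝ, |f' i a - f' i b| ≤ L i * |a - b|)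
    {c : ℝ} (i : Fin n) (hi : c ≤ f' i (x i))
    (hpart : ∀ j : Fin n, s(i, j) ∈ E → c ≤ f' j (x j)) :
    c ≤ f' i (y i) := by
  obtain ⟨hne, hlow, -, hy⟩ := hbal
  set P := Finset.univ.filter (fun j => s(i, j) ∈ E) with hP
  set S := ∑ j ∈ P, (f' i (x i) - f' j (x j)) / (2 * (L i + L j)) with hS
  have hyi : y i = x i - S := hy i
  rcases le_or_gt S 0 with hS0 | hS0
  · have hxy : x i ≤ y i := by rw [hyi]; linarith
    exact le_trans hi (hmono i hxy)
  · set Pm := P.filter (fun j => f' j (x j) < f' i (x i)) with hPm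
    have hScard : Pm.card ≤ 1 := by
      have : Pm = Finset.univ.filter (fun j => s(i, j) ∈ E ∧ f' j (x j) < f' i (x i)) := by
        rw [hPm, hP, Finset.filter_filter]
      rw [this]; exact hlow i
    have hSle : S ≤ ∑ j ∈ Pm, (f' i (x i) - f' j (x j)) / (2 * (L i + L j)) := by
      rw [hS, ← Finset.sum_filter_add_sum_filter_not P (fun j => f' j (x j) < f' i (x i))]
      have h2 : ∑ j ∈ P.filter (fun j => ¬ f' j (x j) < f' i (x i)),
          (f' i (x i) - f' j (x j)) / (2 * (L i + L j)) ≤ 0 := by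
        apply Finset.sum_nonpos
        intro j hj
        rw [Finset.mem_filter] at hj
        obtain ⟨hjP, hjlt⟩ := hj
        rw [hP, Finset.mem_filter] at hjP
        have hne' : f' i (x i) ≠ f' j (x j) := hne i j hjP.2
        have : f' i (x i) < f' j (x j) := lt_of_le_of_ne (not_lt.mp hjlt) hne'
        apply div_nonpos_of_nonpos_of_nonneg
        · linarith
        · have := hL i; have := hL j; linarith
      rw [hPm]; linarith
    have hPmne : Pm.Nonempty := by
      by_contra h
      rw [Finset.not_nonempty_iff_eq_empty] at h
      rw [h, Finset.sum_empty] at hSle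
      linarith
    have hcard1 : Pm.card = 1 := le_antisymm hScard (Finset.card_pos.mpr hPmne)
    obtain ⟨j0, hj0⟩ := Finset.card_eq_one.mp hcard1
    have hj0mem : j0 ∈ Pm := by rw [hj0]; exact Finset.mem_singleton_self j0
    have hj0E : s(i, j0) ∈ E := by
      rw [hPm, Finset.mem_filter, hP, Finset.mem_filter] at hj0mem
      exact hj0mem.1.2
    have hj0c : c ≤ f' j0 (x j0) := hpart j0 hj0E
    have hterm : (f' i (x i) - f' j0 (x j0)) / (2 * (L i + L j0)) ≤
        (f' i (x i) - c) / (2 * L i) := by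
      have h1 : (0:ℝ) < L i := hL i
      have h2 : (0:ℝ) < L j0 := hL j0
      have hnum : 0 ≤ f' i (x i) - f' j0 (x j0) := by
        rw [hPm, Finset.mem_filter] at hj0mem
        linarith [hj0mem.2]
      gcongr
      · linarith
    have hSb : S ≤ (f' i (x i) - c) / (2 * L i) := by
      calc S ≤ _ := hSle
        _ = (f' i (x i) - f' j0 (x j0)) / (2 * (L i + L j0)) := by rw [hj0, Finset.sum_singleton]
        _ ≤ _ := hterm
    have hlipi := hlip i (x i) (y i)
    have habs : |x i - y i| = S := by rw [hyi]; simp [abs_of_pos hS0]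
    rw [habs] at hlipi
    have h1 : (0:ℝ) < L i := hL i
    have hLS : L i * S ≤ (f' i (x i) - c) / 2 := by
      have := mul_le_mul_of_nonneg_left hSb (le_of_lt h1)
      have heq : L i * ((f' i (x i) - c) / (2 * L i)) = (f' i (x i) - c) / 2 := by
        field_simp
      linarith [heq ▸ this]
    have := abs_le.mp hlipi
    linarith [this.1, this.2]

lemma step_upper {n : ℕ} {f' : Fin n → ℝ → ℝ} {L : Fin n → ℝ} {x y : Fin n → ℝ}
    {E : Finset (Sym2 (Fin n))}
    (hbal : IsBalancingStep n f' L x y E)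
    (hL : ∀ i, 0 < L i) (hmono : ∀ i, Monotone (f' i))
    (hlip : ∀ i, ∀ a b : ℝ, |f' i a - f' i b| ≤ L i * |a - b|)
    {c : ℝ} (i : Fin n) (hi : f' i (x i) ≤ c)
    (hpart : ∀ j : Fin n, s(i, j) ∈ E → f' j (x j) ≤ c) :
    f' i (y i) ≤ c := by
  obtain ⟨hne, -, hup, hy⟩ := hbal
  set P := Finset.univ.filter (fun j => s(i, j) ∈ E) with hP
  set S := ∑ j ∈ P, (f' i (x i) - f' j (x j)) / (2 * (L i + L j)) with hS
  have hyi : y i = x i - S := hy i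
  rcases le_or_gt 0 S with hS0 | hS0
  · have hxy : y i ≤ x i := by rw [hyi]; linarith
    exact le_trans (hmono i hxy) hi
  · set Pp := P.filter (fun j => f' i (x i) < f' j (x j)) with hPp
    have hScard : Pp.card ≤ 1 := by
      have : Pp = Finset.univ.filter (fun j => s(i, j) ∈ E ∧ f' i (x i) < f' j (x j)) := by
        rw [hPp, hP, Finset.filter_filter]
      rw [this]; exact hup i
    have hSge : ∑ j ∈ Pp, (f' i (x i) - f' j (x j)) / (2 * (L i + L j)) ≤ S := by
      rw [hS, ← Finset.sum_filter_add_sum_filter_not P (fun j => f' i (x i) < f' j (x j))]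
      have h2 : 0 ≤ ∑ j ∈ P.filter (fun j => ¬ f' i (x i) < f' j (x j)),
          (f' i (x i) - f' j (x j)) / (2 * (L i + L j)) := by
        apply Finset.sum_nonneg
        intro j hj
        rw [Finset.mem_filter] at hj
        obtain ⟨hjP, hjlt⟩ := hj
        rw [hP, Finset.mem_filter] at hjP
        have hne' : f' i (x i) ≠ f' j (x j) := hne i j hjP.2
        have : f' j (x j) < f' i (x i) := lt_of_le_of_ne (not_lt.mp hjlt) (Ne.symm hne')
        apply div_nonneg
        · linarith
        · have := hL i; have := hL j; linarith
      rw [hPp]; linarith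
    have hPpne : Pp.Nonempty := by
      by_contra h
      rw [Finset.not_nonempty_iff_eq_empty] at h
      rw [h, Finset.sum_empty] at hSge
      linarith
    have hcard1 : Pp.card = 1 := le_antisymm hScard (Finset.card_pos.mpr hPpne)
    obtain ⟨j0, hj0⟩ := Finset.card_eq_one.mp hcard1
    have hj0mem : j0 ∈ Pp := by rw [hj0]; exact Finset.mem_singleton_self j0
    have hj0E : s(i, j0) ∈ E := by
      rw [hPp, Finset.mem_filter, hP, Finset.mem_filter] at hj0mem
      exact hj0mem.1.2
    have hj0c : f' j0 (x j0) ≤ c := hpart j0 hj0E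
    have hterm : (f' i (x i) - c) / (2 * L i) ≤
        (f' i (x i) - f' j0 (x j0)) / (2 * (L i + L j0)) := by
      have h1 : (0:ℝ) < L i := hL i
      have h2 : (0:ℝ) < L j0 := hL j0
      have hnum : 0 ≤ f' j0 (x j0) - f' i (x i) := by
        rw [hPp, Finset.mem_filter] at hj0mem
        linarith [hj0mem.2]
      rw [div_le_div_iff₀ (by linarith) (by linarith)]
      nlinarith
    have hSb : (f' i (x i) - c) / (2 * L i) ≤ S := by
      calc (f' i (x i) - c) / (2 * L i) ≤ _ := hterm
        _ = ∑ j ∈ Pp, (f' i (x i) - f' j (x j)) / (2 * (L i + L j)) := by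
            rw [hj0, Finset.sum_singleton]
        _ ≤ S := hSge
    have hlipi := hlip i (x i) (y i)
    have habs : |x i - y i| = -S := by rw [hyi, sub_sub_cancel]; exact abs_of_neg hS0
    rw [habs] at hlipi
    have h1 : (0:ℝ) < L i := hL i
    have hLS : (f' i (x i) - c) / 2 ≤ L i * S := by
      have := mul_le_mul_of_nonneg_left hSb (le_of_lt h1)
      have heq : L i * ((f' i (x i) - c) / (2 * L i)) = (f' i (x i) - c) / 2 := by
        field_simp
      linarith [heq ▸ this]
    have := abs_le.mp hlipi
    linarith [this.1, this.2]

lemma invariant_lemma {n : ℕ} {f' : Fin n → ℝ → ℝ} {L : Fin n → ℝ}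
    {x : ℕ → Fin n → ℝ} {E : ℕ → Finset (Sym2 (Fin n))} {a b : ℕ}
    (hL : ∀ i, 0 < L i) (hmono : ∀ i, Monotone (f' i))
    (hlip : ∀ i, ∀ u v : ℝ, |f' i u - f' i v| ≤ L i * |u - v|)
    (hstep : ∀ k, a ≤ k → k < b → IsBalancingStep n f' L (x k) (x (k + 1)) (E k))
    (d : Fin n) (clo chi : ℝ)
    (hlo0 : ∀ i : Fin n, i ≤ d → clo ≤ f' i (x a i))
    (hhi0 : ∀ j : Fin n, d < j → f' j (x a j) ≤ chi) :
    ∀ k, a ≤ k → k ≤ b →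
      (∀ k', a ≤ k' → k' < k → ∀ i j : Fin n, s(i, j) ∈ E k' → ¬(i ≤ d ∧ d < j)) →
      (∀ i : Fin n, i ≤ d → clo ≤ f' i (x k i)) ∧
      (∀ j : Fin n, d < j → f' j (x k j) ≤ chi) := by
  intro k hak
  induction k, hak using Nat.le_induction with
  | base => intro _ _; exact ⟨hlo0, hhi0⟩
  | succ k hak ih =>
    intro hkb hnc
    have hklb : k < b := hkb
    obtain ⟨hlo, hhi⟩ := ih (le_of_lt hklb)
      (fun k' h1 h2 => hnc k' h1 (Nat.lt_succ_of_lt h2))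
    have hb := hstep k hak hklb
    constructor
    · intro i hid
      refine step_lower hb hL hmono hlip i (hlo i hid) ?_
      intro j hj
      refine hlo j ?_
      by_contra hjd
      exact hnc k hak (Nat.lt_succ_self k) i j hj ⟨hid, lt_of_not_ge hjd⟩
    · intro j hdj
      refine step_upper hb hL hmono hlip j (hhi j hdj) ?_
      intro i hij
      refine hhi i ?_
      by_contra hid
      have hij' : s(i, j) ∈ E k := by rwa [Sym2.eq_swap] at hij
      exact hnc k hak (Nat.lt_succ_self k) i j hij' ⟨le_of_not_gt hid, hdj⟩

lemma pair_eq_deriv {n : ℕ} (K : ℝ) (f f' : Fin n → ℝ → ℝ)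
    (hderiv : ∀ i t, HasDerivAt (f i) (f' i t) t)
    (xs : Fin n → ℝ) (hxs : ∑ i, xs i = K)
    (hmin : ∀ y : Fin n → ℝ, (∑ i, y i = K) → ∑ i, f i (xs i) ≤ ∑ i, f i (y i)) :
    ∀ i j : Fin n, i ≠ j → f' i (xs i) = f' j (xs j) := by
  intro i j hij
  set φ : ℝ → ℝ := fun t => f i (xs i + t) + f j (xs j - t) with hφ
  have hder : HasDerivAt φ (f' i (xs i) - f' j (xs j)) 0 := by
    have h1 : HasDerivAt (fun t : ℝ => f i (xs i + t)) (f' i (xs i)) 0 := by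
      have hinner : HasDerivAt (fun t : ℝ => xs i + t) 1 0 := by
        simpa using (hasDerivAt_id (0:ℝ)).const_add (xs i)
      have := (hderiv i ((fun t : ℝ => xs i + t) 0)).comp 0 hinner
      simpa [Function.comp_def] using this
    have h2 : HasDerivAt (fun t : ℝ => f j (xs j - t)) (-(f' j (xs j))) 0 := by
      have hinner : HasDerivAt (fun t : ℝ => xs j - t) (-1) 0 := by
        simpa using (hasDerivAt_id (0:ℝ)).const_sub (xs j)
      have := (hderiv j ((fun t : ℝ => xs j - t) 0)).comp 0 hinner
      simpa [Function.comp_def] using this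
    simpa [hφ, sub_eq_add_neg, Pi.add_def] using h1.add h2
  have hmin0 : IsLocalMin φ 0 := by
    apply Filter.Eventually.of_forall
    intro t
    set z : Fin n → ℝ := Function.update (Function.update xs i (xs i + t)) j (xs j - t) with hz
    have hzi : z i = xs i + t := by
      rw [hz, Function.update_of_ne hij, Function.update_self]
    have hzj : z j = xs j - t := by rw [hz, Function.update_self]
    have hzo : ∀ m, m ≠ i → m ≠ j → z m = xs m := by
      intro m h1 h2
      rw [hz, Function.update_of_ne h2, Function.update_of_ne h1]
    have hiej : i ∈ Finset.univ.erase j := Finset.mem_erase.mpr ⟨hij, Finset.mem_univ i⟩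
    have e1 : ∑ m, z m = z j + ∑ m ∈ Finset.univ.erase j, z m :=
      (Finset.add_sum_erase _ z (Finset.mem_univ j)).symm
    have e2 : ∑ m ∈ Finset.univ.erase j, z m
        = z i + ∑ m ∈ (Finset.univ.erase j).erase i, z m :=
      (Finset.add_sum_erase _ z hiej).symm
    have e3 : ∑ m ∈ (Finset.univ.erase j).erase i, z m
        = ∑ m ∈ (Finset.univ.erase j).erase i, xs m := by
      apply Finset.sum_congr rfl
      intro m hm
      rw [Finset.mem_erase, Finset.mem_erase] at hm
      exact hzo m hm.1 hm.2.1
    have e1' : ∑ m, xs m = xs j + ∑ m ∈ Finset.univ.erase j, xs m :=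
      (Finset.add_sum_erase _ xs (Finset.mem_univ j)).symm
    have e2' : ∑ m ∈ Finset.univ.erase j, xs m
        = xs i + ∑ m ∈ (Finset.univ.erase j).erase i, xs m :=
      (Finset.add_sum_erase _ xs hiej).symm
    have hsumz : ∑ m, z m = K := by
      rw [e1, e2, e3, hzi, hzj]
      rw [e1', e2'] at hxs
      linarith
    have hmz := hmin z hsumz
    -- expand both sums
    have f1 : ∑ m, f m (z m) = f j (z j) + ∑ m ∈ Finset.univ.erase j, f m (z m) :=
      (Finset.add_sum_erase _ (fun m => f m (z m)) (Finset.mem_univ j)).symm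
    have f2 : ∑ m ∈ Finset.univ.erase j, f m (z m)
        = f i (z i) + ∑ m ∈ (Finset.univ.erase j).erase i, f m (z m) :=
      (Finset.add_sum_erase _ (fun m => f m (z m)) hiej).symm
    have f3 : ∑ m ∈ (Finset.univ.erase j).erase i, f m (z m)
        = ∑ m ∈ (Finset.univ.erase j).erase i, f m (xs m) := by
      apply Finset.sum_congr rfl
      intro m hm
      rw [Finset.mem_erase, Finset.mem_erase] at hm
      rw [hzo m hm.1 hm.2.1]
    have f1' : ∑ m, f m (xs m) = f j (xs j) + ∑ m ∈ Finset.univ.erase j, f m (xs m) :=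
      (Finset.add_sum_erase _ (fun m => f m (xs m)) (Finset.mem_univ j)).symm
    have f2' : ∑ m ∈ Finset.univ.erase j, f m (xs m)
        = f i (xs i) + ∑ m ∈ (Finset.univ.erase j).erase i, f m (xs m) :=
      (Finset.add_sum_erase _ (fun m => f m (xs m)) hiej).symm
    rw [f1, f2, f3, hzi, hzj] at hmz
    rw [f1', f2'] at hmz
    have : φ 0 = f i (xs i) + f j (xs j) := by simp [hφ]
    have ht : φ t = f i (xs i + t) + f j (xs j - t) := rfl
    rw [this, ht]
    linarith
  have hz := hmin0.hasDerivAt_eq_zero hder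
  linarith

/-- Under the hypotheses of Statement 8, if moreover x(ℓB) lies in the
feasible set S = {x : Σᵢ xᵢ = K} and x* ∈ S minimizes F over S, then
Σ_{k=ℓB}^{(ℓ+1)B−1} Σ_{{i,j} ∈ E(k)} (f_i'(x_i(k)) − f_j'(x_j(k)))²
  ≥ (1/n²) Σ_{i=1}^n (f_i'(x_i(ℓB)) − f_i'(x_i*))². -/
theorem stmt_9 (n : ℕ) (hn : 0 < n) (K : ℝ) (f f' : Fin n → ℝ → ℝ) (L : Fin n → ℝ)
    (hL : ∀ i, 0 < L i)
    (hconv : ∀ i, ConvexOn ℝ Set.univ (f i))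
    (hderiv : ∀ i t, HasDerivAt (f i) (f' i t) t)
    (hlip : ∀ i, ∀ a b : ℝ, |f' i a - f' i b| ≤ L i * |a - b|)
    (B : ℕ) (hB : 1 ≤ B) (ℓ : ℕ)
    (x : ℕ → Fin n → ℝ) (E : ℕ → Finset (Sym2 (Fin n)))
    (hstep : ∀ k, ℓ * B ≤ k → k < (ℓ + 1) * B →
      IsBalancingStep n f' L (x k) (x (k + 1)) (E k))
    (hsort : ∀ i j : Fin n, i ≤ j → f' j (x (ℓ * B) j) ≤ f' i (x (ℓ * B) i))
    (hcross : ∀ d : Fin n, ∀ hd : (d : ℕ) + 1 < n,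
      f' ⟨(d : ℕ) + 1, hd⟩ (x (ℓ * B) ⟨(d : ℕ) + 1, hd⟩) < f' d (x (ℓ * B) d) →
      ∃ k : ℕ, ℓ * B ≤ k ∧ k < (ℓ + 1) * B ∧
        ∃ i j : Fin n, s(i, j) ∈ E k ∧ i ≤ d ∧ d < j)
    (hfeas : ∑ i, x (ℓ * B) i = K)
    (xs : Fin n → ℝ) (hxs : ∑ i, xs i = K)
    (hmin : ∀ y : Fin n → ℝ, (∑ i, y i = K) → ∑ i, f i (xs i) ≤ ∑ i, f i (y i)) :
    (1 / (n : ℝ) ^ 2) * ∑ i, (f' i (x (ℓ * B) i) - f' i (xs i)) ^ 2 ≤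
    ∑ k ∈ Finset.Ico (ℓ * B) ((ℓ + 1) * B),
      ∑ e ∈ E k, Sym2.lift
        ⟨fun i j => (f' i (x k i) - f' j (x k j)) ^ 2, by intro a b; ring_nf⟩ e := by
  classical
  have hmono : ∀ i, Monotone (f' i) := fun i => mono_of_convex (hconv i) (hderiv i)
  set a := ℓ * B with ha
  set b := (ℓ + 1) * B with hb
  set g : Fin n → ℝ := fun i => f' i (x a i) with hg
  set G : ℕ → ℝ := fun d => if h : d < n then g ⟨d, h⟩ else 0 with hG
  have hGeq : ∀ (d : ℕ) (h : d < n), G d = f' ⟨d, h⟩ (x a ⟨d, h⟩) := by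
    intro d h; rw [hG]; simp only [dif_pos h]; rfl
  set lam : ℝ := f' ⟨0, hn⟩ (xs ⟨0, hn⟩) with hlamdef
  have hpair := pair_eq_deriv K f f' hderiv xs hxs hmin
  have hlam : ∀ i : Fin n, f' i (xs i) = lam := by
    intro i
    by_cases h : i = ⟨0, hn⟩
    · rw [h]
    · exact hpair i ⟨0, hn⟩ h
  have hn1 : n - 1 < n := Nat.sub_lt hn one_pos
  -- lam is in [G (n-1), G 0]
  have hglo : ∀ i : Fin n, G (n-1) ≤ g i := by
    intro i
    rw [hGeq (n-1) hn1]
    exact hsort i ⟨n-1, hn1⟩ (Fin.le_def.mpr (Nat.le_pred_of_lt i.isLt))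
  have hghi : ∀ i : Fin n, g i ≤ G 0 := by
    intro i
    rw [hGeq 0 hn]
    exact hsort ⟨0, hn⟩ i (Fin.le_def.mpr (Nat.zero_le _))
  have hnempty : (Finset.univ : Finset (Fin n)).Nonempty := ⟨⟨0, hn⟩, Finset.mem_univ _⟩
  have hlamlo : G (n-1) ≤ lam := by
    have hex : ∃ i : Fin n, x a i ≤ xs i := by
      by_contra h
      push_neg at h
      have := Finset.sum_lt_sum_of_nonempty hnempty (fun i _ => h i)
      rw [hxs, hfeas] at this
      exact lt_irrefl K this
    obtain ⟨i, hi⟩ := hex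
    have : g i ≤ f' i (xs i) := hmono i hi
    rw [hlam i] at this
    exact le_trans (hglo i) this
  have hlamhi : lam ≤ G 0 := by
    have hex : ∃ i : Fin n, xs i ≤ x a i := by
      by_contra h
      push_neg at h
      have := Finset.sum_lt_sum_of_nonempty hnempty (fun i _ => h i)
      rw [hxs, hfeas] at this
      exact lt_irrefl K this
    obtain ⟨i, hi⟩ := hex
    have : f' i (xs i) ≤ g i := hmono i hi
    rw [hlam i] at this
    exact le_trans this (hghi i)
  -- Step 2
  have hstep2 : ∑ i, (g i - lam) ^ 2 ≤ (n : ℝ) * (G 0 - G (n-1)) ^ 2 := by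
    have hbd : ∀ i ∈ Finset.univ, (g i - lam) ^ 2 ≤ (G 0 - G (n-1)) ^ 2 := by
      intro i _
      apply sq_le_sq'
      · have := hglo i; linarith
      · have := hghi i; linarith
    calc ∑ i, (g i - lam) ^ 2 ≤ (Finset.univ : Finset (Fin n)).card • (G 0 - G (n-1)) ^ 2 :=
          Finset.sum_le_card_nsmul _ _ _ hbd
      _ = (n : ℝ) * (G 0 - G (n-1)) ^ 2 := by
          rw [Finset.card_univ, Fintype.card_fin, nsmul_eq_mul]
  set D : ℕ → ℝ := fun d => G d - G (d+1) with hD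
  -- Step 3
  have htel : ∑ d ∈ Finset.range (n-1), D d = G 0 - G (n-1) :=
    Finset.sum_range_sub' G (n-1)
  have hstep3 : (G 0 - G (n-1)) ^ 2 ≤ ((n : ℝ) - 1) * ∑ d ∈ Finset.range (n-1), D d ^ 2 := by
    have h := sq_sum_le_card_mul_sum_sq (s := Finset.range (n-1)) (f := D)
    rw [htel, Finset.card_range] at h
    have hc : ((n - 1 : ℕ) : ℝ) = (n : ℝ) - 1 := by
      rw [Nat.cast_sub hn]; norm_num
    rw [hc] at h
    exact h
  have hDnn : ∀ d, d < n - 1 → 0 ≤ D d := by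
    intro d hd
    have hd1 : d + 1 < n := by omega
    have hdn : d < n := by omega
    rw [hD]
    simp only
    rw [hGeq d hdn, hGeq (d+1) hd1]
    have := hsort ⟨d, hdn⟩ ⟨d+1, hd1⟩ (Fin.mk_le_mk.mpr (Nat.le_succ d))
    linarith
  -- key selection
  have key : ∀ d : ℕ, ∃ (k : ℕ) (p q : Fin n),
      d + 1 < n → 0 < D d →
      (a ≤ k ∧ k < b ∧ s(p, q) ∈ E k ∧ (p : ℕ) ≤ d ∧ (d : ℕ) < (q : ℕ) ∧
       (∀ i' : Fin n, (i' : ℕ) ≤ d → G d ≤ f' i' (x k i')) ∧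
       (∀ j' : Fin n, d < (j' : ℕ) → f' j' (x k j') ≤ G (d+1))) := by
    intro d
    by_cases hd : d + 1 < n ∧ 0 < D d
    case neg =>
      exact ⟨a, ⟨0, hn⟩, ⟨0, hn⟩, fun h1 h2 => absurd ⟨h1, h2⟩ hd⟩
    obtain ⟨hd1, hpos⟩ := hd
    have hdn : d < n := Nat.lt_of_succ_lt hd1
    have hpos' : f' ⟨d+1, hd1⟩ (x a ⟨d+1, hd1⟩) < f' ⟨d, hdn⟩ (x a ⟨d, hdn⟩) := by
      rw [← hGeq d hdn, ← hGeq (d+1) hd1]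
      rw [hD] at hpos; simp only at hpos; linarith
    obtain ⟨k1, hk1a, hk1b, i1, j1, hij1, hi1, hj1⟩ := hcross ⟨d, hdn⟩ hd1 hpos'
    have hQ : ∃ k : ℕ, a ≤ k ∧ k < b ∧
        ∃ p q : Fin n, s(p, q) ∈ E k ∧ (p : ℕ) ≤ d ∧ d < (q : ℕ) :=
      ⟨k1, hk1a, hk1b, i1, j1, hij1, hi1, hj1⟩
    set k0 := Nat.find hQ with hk0
    obtain ⟨hk0a, hk0b, p, q, hpq, hpd, hdq⟩ := Nat.find_spec hQ
    have hnc : ∀ k', a ≤ k' → k' < k0 →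
        ∀ i j : Fin n, s(i, j) ∈ E k' → ¬(i ≤ (⟨d, hdn⟩ : Fin n) ∧ (⟨d, hdn⟩ : Fin n) < j) := by
      intro k' hk'a hk'lt i j hij hcontra
      exact Nat.find_min hQ hk'lt
        ⟨hk'a, lt_trans hk'lt hk0b, i, j, hij, Fin.le_def.mp hcontra.1, Fin.lt_def.mp hcontra.2⟩
    have hinv := invariant_lemma hL hmono hlip hstep (⟨d, hdn⟩ : Fin n) (G d) (G (d+1))
      (fun i hi => by rw [hGeq d hdn]; exact hsort i ⟨d, hdn⟩ hi)
      (fun j hj => by rw [hGeq (d+1) hd1]; exact hsort ⟨d+1, hd1⟩ j (Fin.le_def.mpr hj))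
      k0 hk0a (le_of_lt hk0b) hnc
    refine ⟨k0, p, q, fun _ _ => ⟨hk0a, hk0b, hpq, hpd, hdq, ?_, ?_⟩⟩
    · intro i' hi'
      exact hinv.1 i' (Fin.le_def.mpr hi')
    · intro j' hj'
      exact hinv.2 j' (Fin.lt_def.mpr hj')
  choose kf pf qf hkey using key
  -- assemble step 4
  set ψ : ℕ → (_ : ℕ) × Sym2 (Fin n) := fun d => ⟨kf d, s(pf d, qf d)⟩ with hψ
  set T := (Finset.Ico a b).sigma (fun k => E k) with hT
  set F : ((_ : ℕ) × Sym2 (Fin n)) → ℝ := fun p => Sym2.lift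
    ⟨fun i j => (f' i (x p.1 i) - f' j (x p.1 j)) ^ 2, by intro u v; ring_nf⟩ p.2 with hF
  have hnnF : ∀ p : (_ : ℕ) × Sym2 (Fin n), 0 ≤ F p := by
    rintro ⟨k, e⟩
    induction e using Sym2.ind with
    | _ u v => rw [hF]; simp only [Sym2.lift_mk]; positivity
  set Dpos := (Finset.range (n-1)).filter (fun d => 0 < D d) with hDpos
  have hmem' : ∀ d ∈ Dpos, d + 1 < n ∧ 0 < D d := by
    intro d hd
    rw [hDpos, Finset.mem_filter, Finset.mem_range] at hd
    exact ⟨by omega, hd.2⟩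
  have hmaps : ∀ d ∈ Dpos, ψ d ∈ T := by
    intro d hd
    obtain ⟨h1, h2⟩ := hmem' d hd
    obtain ⟨hka, hkb, hE, _⟩ := hkey d h1 h2
    rw [hT]
    exact Finset.mem_sigma.mpr ⟨Finset.mem_Ico.mpr ⟨hka, hkb⟩, hE⟩
  have hfb : ∀ p ∈ T, ∑ d ∈ Dpos.filter (fun d => ψ d = p), D d ^ 2 ≤ F p := by
    intro p hp
    set Φ := Dpos.filter (fun d => ψ d = p) with hΦ
    rcases Φ.eq_empty_or_nonempty with hE | hne'
    · rw [hE, Finset.sum_empty]; exact hnnF p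
    set d0 := Φ.min' hne' with hd0def
    set d1 := Φ.max' hne' with hd1def
    have hd0 : d0 ∈ Φ := Φ.min'_mem hne'
    have hd1 : d1 ∈ Φ := Φ.max'_mem hne'
    have hΦmem : ∀ d ∈ Φ, (d + 1 < n ∧ 0 < D d) ∧ ψ d = p := by
      intro d hd
      rw [hΦ, Finset.mem_filter] at hd
      exact ⟨hmem' d hd.1, hd.2⟩
    obtain ⟨⟨hd0n, hd0pos⟩, hψ0⟩ := hΦmem d0 hd0
    obtain ⟨⟨hd1n, hd1pos⟩, hψ1⟩ := hΦmem d1 hd1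
    have hd01 : d0 ≤ d1 := Φ.min'_le d1 hd1
    obtain ⟨hk0a, hk0b, hE0, hp0, hq0, hlo0, hhi0⟩ := hkey d0 hd0n hd0pos
    obtain ⟨hk1a, hk1b, hE1, hp1, hq1, hlo1, hhi1⟩ := hkey d1 hd1n hd1pos
    -- from ψ d0 = ψ d1 : kf d0 = kf d1 and pairs equal
    have hψeq : ψ d0 = ψ d1 := by rw [hψ0, hψ1]
    have hkeq : kf d0 = kf d1 := congrArg Sigma.fst hψeq
    have hseq : s(pf d0, qf d0) = s(pf d1, qf d1) := by
      have := (Sigma.mk.inj_iff.mp hψeq).2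
      exact eq_of_heq this
    have hqeq : qf d0 = qf d1 := by
      rcases Sym2.eq_iff.mp hseq with ⟨h1, h2⟩ | ⟨h1, h2⟩
      · exact h2
      · -- cross case impossible
        exfalso
        have hv : (pf d0 : ℕ) = (qf d1 : ℕ) := congrArg Fin.val h1
        omega
    -- bounds
    have hf1 : G d0 ≤ f' (pf d0) (x (kf d0) (pf d0)) := hlo0 (pf d0) hp0
    have hf2 : f' (qf d0) (x (kf d0) (qf d0)) ≤ G (d1 + 1) := by
      rw [hqeq, hkeq]
      exact hhi1 (qf d1) hq1
    -- telescoping over Icc d0 d1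
    have htel2 : ∑ d ∈ Finset.Icc d0 d1, D d = G d0 - G (d1 + 1) := by
      rw [← Finset.Ico_add_one_right_eq_Icc, Finset.sum_Ico_eq_sum_range]
      have hlen : d1 + 1 - d0 = (d1 - d0) + 1 := by omega
      rw [hlen]
      have h := Finset.sum_range_sub' (fun m => G (d0 + m)) (d1 - d0 + 1)
      have he : d0 + (d1 - d0 + 1) = d1 + 1 := by omega
      rw [he] at h
      exact h
    have hsubset : Φ ⊆ Finset.Icc d0 d1 := by
      intro d hd
      exact Finset.mem_Icc.mpr ⟨Φ.min'_le d hd, Φ.le_max' d hd⟩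
    have hsub : ∑ d ∈ Φ, D d ≤ ∑ d ∈ Finset.Icc d0 d1, D d := by
      apply Finset.sum_le_sum_of_subset_of_nonneg hsubset
      intro d hd _
      rw [Finset.mem_Icc] at hd
      exact hDnn d (by omega)
    have hgap : ∑ d ∈ Φ, D d ≤ f' (pf d0) (x (kf d0) (pf d0)) - f' (qf d0) (x (kf d0) (qf d0)) := by
      calc ∑ d ∈ Φ, D d ≤ ∑ d ∈ Finset.Icc d0 d1, D d := hsub
        _ = G d0 - G (d1 + 1) := htel2
        _ ≤ _ := by linarith
    have hsumnn : 0 ≤ ∑ d ∈ Φ, D d :=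
      Finset.sum_nonneg (fun d hd => le_of_lt (hΦmem d hd).1.2)
    have hsq : ∑ d ∈ Φ, D d ^ 2 ≤ (∑ d ∈ Φ, D d) ^ 2 :=
      Finset.sum_sq_le_sq_sum_of_nonneg (fun d hd => le_of_lt (hΦmem d hd).1.2)
    have hFp : F p = (f' (pf d0) (x (kf d0) (pf d0)) - f' (qf d0) (x (kf d0) (qf d0))) ^ 2 := by
      rw [← hψ0, hψ]
      simp only
      rw [hF]
      simp only [Sym2.lift_mk]
    rw [hFp]
    calc ∑ d ∈ Φ, D d ^ 2 ≤ (∑ d ∈ Φ, D d) ^ 2 := hsq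
      _ ≤ _ := pow_le_pow_left₀ hsumnn hgap 2
  have hstep4 : ∑ d ∈ Finset.range (n-1), D d ^ 2 ≤ ∑ p ∈ T, F p := by
    have h0 : ∑ d ∈ Dpos, D d ^ 2 = ∑ d ∈ Finset.range (n-1), D d ^ 2 := by
      apply Finset.sum_subset (Finset.filter_subset _ _)
      intro d hd hnd
      rw [Finset.mem_range] at hd
      simp only [Finset.mem_filter, Finset.mem_range, not_and, not_lt] at hnd
      have h1 := hDnn d hd
      have h2 := hnd hd
      have : D d = 0 := le_antisymm h2 h1
      rw [this]; ring
    rw [← h0, ← Finset.sum_fiberwise_of_maps_to hmaps (fun d => D d ^ 2)]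
    exact Finset.sum_le_sum hfb
  -- final assembly
  have hRHS : ∑ k ∈ Finset.Ico a b,
      ∑ e ∈ E k, Sym2.lift
        ⟨fun i j => (f' i (x k i) - f' j (x k j)) ^ 2, by intro u v; ring_nf⟩ e
      = ∑ p ∈ T, F p := by
    rw [hT, Finset.sum_sigma]
  rw [hRHS]
  have hLHS : ∑ i, (f' i (x a i) - f' i (xs i)) ^ 2 = ∑ i, (g i - lam) ^ 2 := by
    apply Finset.sum_congr rfl
    intro i _
    rw [hlam i]
  rw [hLHS]
  have hnR : (0 : ℝ) < (n : ℝ) := Nat.cast_pos.mpr hn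
  have hS4 : 0 ≤ ∑ d ∈ Finset.range (n-1), D d ^ 2 :=
    Finset.sum_nonneg (fun d _ => sq_nonneg _)
  have hchain : ∑ i, (g i - lam) ^ 2 ≤
      (n : ℝ) * (((n : ℝ) - 1) * ∑ d ∈ Finset.range (n-1), D d ^ 2) := by
    calc ∑ i, (g i - lam) ^ 2 ≤ (n : ℝ) * (G 0 - G (n-1)) ^ 2 := hstep2
      _ ≤ (n : ℝ) * (((n : ℝ) - 1) * ∑ d ∈ Finset.range (n-1), D d ^ 2) := by
          apply mul_le_mul_of_nonneg_left hstep3 (le_of_lt hnR)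
  calc (1 / (n : ℝ) ^ 2) * ∑ i, (g i - lam) ^ 2
      ≤ (1 / (n : ℝ) ^ 2) * ((n : ℝ) * (((n : ℝ) - 1) * ∑ d ∈ Finset.range (n-1), D d ^ 2)) := by
        apply mul_le_mul_of_nonneg_left hchain
        positivity
    _ ≤ ∑ d ∈ Finset.range (n-1), D d ^ 2 := by
        rw [div_mul_eq_mul_div, one_mul, div_le_iff₀ (by positivity)]
        nlinarith [hS4, hnR]
    _ ≤ ∑ p ∈ T, F p := hstep4
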